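/- For every k with 1 ≤ k ≤ 5 there exists θ_k ∈ [0,1) such that Re(δ(ζ)/(1 − θ_k ζ)) > 0 for all complex ζ with |ζ| < 1, where δ(ζ) = Σ_{ℓ=1}^k (1/ℓ)(1−ζ)^ℓ. In particular one may take θ_1 = θ_2 = 0. -/

import Mathlib

lemma re_div_pos (w z : ℂ) (hz : z ≠ 0) (h : 0 < w.re * z.re + w.im * z.im) :
    0 < (w / z).re := by
  rw [Complex.div_re, ← add_div]
  exact div_pos h (Complex.normSq_pos.2 hz)

lemma denom_ne (θ : ℝ) (hθ : 0 ≤ θ) (hθ1 : θ < 1) (ζ : ℂ) (hζ : ‖ζ‖ < 1) :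
    1 - (θ : ℂ) * ζ ≠ 0 := by
  intro h
  have h1 : (1 : ℂ) = (θ : ℂ) * ζ := by linear_combination h
  have h2 := congrArg norm h1
  simp only [norm_one, norm_mul, Complex.norm_real, Real.norm_eq_abs,
    abs_of_nonneg hθ] at h2
  nlinarith [norm_nonneg ζ]

lemma normsq_lt (ζ : ℂ) (hζ : ‖ζ‖ < 1) : ζ.re ^ 2 + ζ.im ^ 2 < 1 := by
  have h2 : Complex.normSq ζ < 1 := by
    rw [← Complex.sq_norm]
    nlinarith [norm_nonneg ζ]
  simpa [Complex.normSq_apply, sq] using h2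

set_option maxHeartbeats 2000000 in
/-- **Nevanlinna–Odeh multiplier property of the BDF methods of orders 1–5.**
For every `1 ≤ k ≤ 5` there exists `θ ∈ [0,1)` (with `θ = 0` for `k ≤ 2`) such that
`Re (δ(ζ)/(1 - θζ)) > 0` for all complex `ζ` with `|ζ| < 1`, where
`δ(ζ) = ∑_{ℓ=1}^k (1/ℓ)(1-ζ)^ℓ` is the generating polynomial of the `k`-step BDF method. -/
theorem nevanlinna_odeh_multiplier (k : ℕ) (hk1 : 1 ≤ k) (hk5 : k ≤ 5) :
    ∃ θ : ℝ, 0 ≤ θ ∧ θ < 1 ∧ (k ≤ 2 → θ = 0) ∧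
      ∀ ζ : ℂ, ‖ζ‖ < 1 →
        0 < ((∑ ℓ ∈ Finset.Icc 1 k, ((ℓ : ℂ))⁻¹ * (1 - ζ) ^ ℓ) / (1 - (θ : ℂ) * ζ)).re := by
  interval_cases k
  · -- k = 1
    refine ⟨0, le_rfl, one_pos, fun _ => rfl, fun ζ hζ => ?_⟩
    apply re_div_pos _ _ (denom_ne 0 le_rfl one_pos ζ hζ)
    have hx := normsq_lt ζ hζ
    simp only [Finset.Icc_self, Finset.sum_singleton, pow_one]
    simp [Complex.sub_re, Complex.sub_im, Complex.mul_re, Complex.mul_im]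
    nlinarith [sq_nonneg ζ.im]
  · -- k = 2
    refine ⟨0, le_rfl, one_pos, fun _ => rfl, fun ζ hζ => ?_⟩
    apply re_div_pos _ _ (denom_ne 0 le_rfl one_pos ζ hζ)
    have hx := normsq_lt ζ hζ
    set x := ζ.re with hxd
    set y := ζ.im with hyd
    have hp : 0 < 1 - x := by nlinarith [sq_nonneg y, sq_nonneg (x-1)]
    have hs : 0 < 1 - x^2 - y^2 := by linarith
    rw [show Finset.Icc 1 2 = {1, 2} from rfl]
    rw [Finset.sum_insert (by decide), Finset.sum_singleton]
    simp only [Nat.cast_ofNat, Nat.cast_one, inv_one, one_mul, pow_one,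
      show ((2:ℂ))⁻¹ = ((1/2 : ℝ) : ℂ) by norm_num, pow_succ, pow_zero]
    simp only [Complex.add_re, Complex.add_im, Complex.sub_re, Complex.sub_im,
      Complex.mul_re, Complex.mul_im, Complex.one_re, Complex.one_im,
      Complex.ofReal_re, Complex.ofReal_im, one_mul, mul_one, ← hxd, ← hyd]
    nlinarith [hs, sq_nonneg (1-x)]
  · -- k = 3, θ = 1/10
    refine ⟨1/10, by norm_num, by norm_num, fun h => absurd h (by norm_num), fun ζ hζ => ?_⟩
    apply re_div_pos _ _ (denom_ne _ (by norm_num) (by norm_num) ζ hζ)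
    have hx := normsq_lt ζ hζ
    set x := ζ.re with hxd
    set y := ζ.im with hyd
    have hp : 0 < 1 - x := by nlinarith [sq_nonneg y, sq_nonneg (x-1)]
    have hq : 0 < 1 + x := by nlinarith [sq_nonneg y, sq_nonneg (x+1)]
    have hs : 0 < 1 - x^2 - y^2 := by linarith
    have ht : 0 ≤ y^2 := sq_nonneg y
    rw [show Finset.Icc 1 3 = {1, 2, 3} from rfl]
    rw [Finset.sum_insert (by decide), Finset.sum_insert (by decide), Finset.sum_singleton]
    simp only [Nat.cast_ofNat, Nat.cast_one, inv_one, one_mul, pow_one,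
      show ((2:ℂ))⁻¹ = ((1/2 : ℝ) : ℂ) by norm_num,
      show ((3:ℂ))⁻¹ = ((1/3 : ℝ) : ℂ) by norm_num,
      pow_succ, pow_zero]
    simp only [Complex.add_re, Complex.add_im, Complex.sub_re, Complex.sub_im,
      Complex.mul_re, Complex.mul_im, Complex.one_re, Complex.one_im,
      Complex.ofReal_re, Complex.ofReal_im, one_mul, mul_one, ← hxd, ← hyd]
    have c1 : 0 ≤ (1-x^2-y^2) := hs.le
    have c2 : 0 ≤ (1-x^2-y^2)*y^2 := mul_nonneg hs.le ht
    have c3 : 0 ≤ (1+x)*(1-x^2-y^2)^2 := mul_nonneg hq.le (sq_nonneg _)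
    have c4 : 0 ≤ (1+x)^3*(1-x^2-y^2) := mul_nonneg (pow_nonneg hq.le 3) hs.le
    have c5 : 0 ≤ (1-x)*(y^2)^2 := mul_nonneg hp.le (sq_nonneg _)
    have c6 : 0 ≤ (1-x)*(1-x^2-y^2) := mul_nonneg hp.le hs.le
    have c7 : 0 ≤ (1-x)^2*(1-x^2-y^2) := mul_nonneg (sq_nonneg _) hs.le
    have c8 : 0 ≤ (1-x)^3*y^2 := mul_nonneg (pow_nonneg hp.le 3) ht
    have c9 : 0 < (1-x)^4 := pow_pos hp 4
    have c10 : 0 ≤ (x-1/2)^2*y^2 := mul_nonneg (sq_nonneg _) ht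
    have c11 : 0 ≤ (x-3/5)^2*(1-x) := mul_nonneg (sq_nonneg _) hp.le
    linarith [c1, c2, c3, c4, c5, c6, c7, c8, c9, c10, c11]
  · -- k = 4, θ = 3/10
    refine ⟨3/10, by norm_num, by norm_num, fun h => absurd h (by norm_num), fun ζ hζ => ?_⟩
    apply re_div_pos _ _ (denom_ne _ (by norm_num) (by norm_num) ζ hζ)
    have hx := normsq_lt ζ hζ
    set x := ζ.re with hxd
    set y := ζ.im with hyd
    have hp : 0 < 1 - x := by nlinarith [sq_nonneg y, sq_nonneg (x-1)]
    have hq : 0 < 1 + x := by nlinarith [sq_nonneg y, sq_nonneg (x+1)]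
    have hs : 0 < 1 - x^2 - y^2 := by linarith
    have ht : 0 ≤ y^2 := sq_nonneg y
    rw [show Finset.Icc 1 4 = {1, 2, 3, 4} from rfl]
    rw [Finset.sum_insert (by decide), Finset.sum_insert (by decide),
      Finset.sum_insert (by decide), Finset.sum_singleton]
    simp only [Nat.cast_ofNat, Nat.cast_one, inv_one, one_mul, pow_one,
      show ((2:ℂ))⁻¹ = ((1/2 : ℝ) : ℂ) by norm_num,
      show ((3:ℂ))⁻¹ = ((1/3 : ℝ) : ℂ) by norm_num,
      show ((4:ℂ))⁻¹ = ((1/4 : ℝ) : ℂ) by norm_num,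
      pow_succ, pow_zero]
    simp only [Complex.add_re, Complex.add_im, Complex.sub_re, Complex.sub_im,
      Complex.mul_re, Complex.mul_im, Complex.one_re, Complex.one_im,
      Complex.ofReal_re, Complex.ofReal_im, one_mul, mul_one, ← hxd, ← hyd]
    have c1 : 0 ≤ (1-x^2-y^2)*y^2 := mul_nonneg hs.le ht
    have c2 : 0 ≤ (1-x^2-y^2)^2 := sq_nonneg _
    have c3 : 0 ≤ (1+x)^2*((1-x^2-y^2)*y^2) := mul_nonneg (sq_nonneg _) c1
    have c4 : 0 ≤ (1+x)^2*(1-x^2-y^2)^2 := mul_nonneg (sq_nonneg _) c2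
    have c5 : 0 ≤ (1+x)^4*(1-x^2-y^2) := mul_nonneg (pow_nonneg hq.le 4) hs.le
    have c6 : 0 ≤ (1-x)*((1-x^2-y^2)*y^2) := mul_nonneg hp.le c1
    have c7 : 0 ≤ (1-x)*(1-x^2-y^2)^2 := mul_nonneg hp.le c2
    have c8 : 0 < (1-x)^2*(1-x^2-y^2) := mul_pos (pow_pos hp 2) hs
    have c9 : 0 < (1-x)^5 := pow_pos hp 5
    have c10 : 0 ≤ (x-1/10)^2*(1-x)^2 := mul_nonneg (sq_nonneg _) (sq_nonneg _)
    have c11 : 0 ≤ (x-1/5)^2*(1-x) := mul_nonneg (sq_nonneg _) hp.le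
    have c12 : 0 ≤ (x-1/5)^2*((1-x)*y^2) := mul_nonneg (sq_nonneg _) (mul_nonneg hp.le ht)
    have c13 : 0 ≤ (x-1/5)^2*(1-x)^2 := mul_nonneg (sq_nonneg _) (sq_nonneg _)
    linarith [c1, c2, c3, c4, c5, c6, c7, c8, c9, c10, c11, c12, c13]
  · -- k = 5, θ = 9/10
    refine ⟨9/10, by norm_num, by norm_num, fun h => absurd h (by norm_num), fun ζ hζ => ?_⟩
    apply re_div_pos _ _ (denom_ne _ (by norm_num) (by norm_num) ζ hζ)
    have hx := normsq_lt ζ hζ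
    set x := ζ.re with hxd
    set y := ζ.im with hyd
    have hp : 0 < 1 - x := by nlinarith [sq_nonneg y, sq_nonneg (x-1)]
    have hq : 0 < 1 + x := by nlinarith [sq_nonneg y, sq_nonneg (x+1)]
    have hs : 0 < 1 - x^2 - y^2 := by linarith
    have ht : 0 ≤ y^2 := sq_nonneg y
    rw [show Finset.Icc 1 5 = {1, 2, 3, 4, 5} from rfl]
    rw [Finset.sum_insert (by decide), Finset.sum_insert (by decide),
      Finset.sum_insert (by decide), Finset.sum_insert (by decide), Finset.sum_singleton]
    simp only [Nat.cast_ofNat, Nat.cast_one, inv_one, one_mul, pow_one,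
      show ((2:ℂ))⁻¹ = ((1/2 : ℝ) : ℂ) by norm_num,
      show ((3:ℂ))⁻¹ = ((1/3 : ℝ) : ℂ) by norm_num,
      show ((4:ℂ))⁻¹ = ((1/4 : ℝ) : ℂ) by norm_num,
      show ((5:ℂ))⁻¹ = ((1/5 : ℝ) : ℂ) by norm_num,
      pow_succ, pow_zero]
    simp only [Complex.add_re, Complex.add_im, Complex.sub_re, Complex.sub_im,
      Complex.mul_re, Complex.mul_im, Complex.one_re, Complex.one_im,
      Complex.ofReal_re, Complex.ofReal_im, one_mul, mul_one, ← hxd, ← hyd]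
    have c1 : 0 ≤ (1+x)*((1-x^2-y^2)*(y^2)^2) :=
      mul_nonneg hq.le (mul_nonneg hs.le (sq_nonneg _))
    have c2 : 0 ≤ (1+x)*((1-x^2-y^2)^2*y^2) :=
      mul_nonneg hq.le (mul_nonneg (sq_nonneg _) ht)
    have c3 : 0 ≤ (1+x)^3*((1-x^2-y^2)*y^2) :=
      mul_nonneg (pow_nonneg hq.le 3) (mul_nonneg hs.le ht)
    have c4 : 0 ≤ (1-x)*((1-x^2-y^2)*(y^2)^2) :=
      mul_nonneg hp.le (mul_nonneg hs.le (sq_nonneg _))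
    have c5 : 0 ≤ (1-x)^2*(1+x)*((1-x^2-y^2)*y^2) :=
      mul_nonneg (mul_nonneg (sq_nonneg _) hq.le) (mul_nonneg hs.le ht)
    have c6 : 0 ≤ (1-x)^2*(1+x)^3*(1-x^2-y^2) :=
      mul_nonneg (mul_nonneg (sq_nonneg _) (pow_nonneg hq.le 3)) hs.le
    have c7 : 0 ≤ (1-x)^3*((1-x^2-y^2)*y^2) :=
      mul_nonneg (pow_nonneg hp.le 3) (mul_nonneg hs.le ht)
    have c8 : 0 < (1-x)^3*(1-x^2-y^2)^2 := mul_pos (pow_pos hp 3) (pow_pos hs 2)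
    have c9 : 0 ≤ (1-x)^3*(1+x)^2*(1-x^2-y^2) :=
      mul_nonneg (mul_nonneg (pow_nonneg hp.le 3) (sq_nonneg _)) hs.le
    have c10 : 0 ≤ (x+3/10)^2*((1+x)*y^2) := mul_nonneg (sq_nonneg _) (mul_nonneg hq.le ht)
    have c11 : 0 ≤ (x+1/5)^2*((1-x)*y^2) := mul_nonneg (sq_nonneg _) (mul_nonneg hp.le ht)
    have c12 : 0 ≤ (x+1/5)^2*(1-x)^2 := mul_nonneg (sq_nonneg _) (sq_nonneg _)
    have c13 : 0 ≤ (x-1/10)^2*(1-x)^2 := mul_nonneg (sq_nonneg _) (sq_nonneg _)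
    have c14 : 0 ≤ (x-4/5)^2*((1+x)*(1-x^2-y^2)) :=
      mul_nonneg (sq_nonneg _) (mul_nonneg hq.le hs.le)
    have c15 : 0 ≤ (x-9/10)^2*((1+x)*(1-x^2-y^2)) :=
      mul_nonneg (sq_nonneg _) (mul_nonneg hq.le hs.le)
    have c16 : 0 ≤ (y^2-3/4*(1-x))^2*((1-x)*y^2) :=
      mul_nonneg (sq_nonneg _) (mul_nonneg hp.le ht)
    have c17 : 0 ≤ (y^2-3/4*(1-x))^2*(1-x)^2 := mul_nonneg (sq_nonneg _) (sq_nonneg _)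
    have c18 : 0 ≤ (y^2-3/4*(1-x))^2*((1+x)*y^2) :=
      mul_nonneg (sq_nonneg _) (mul_nonneg hq.le ht)
    have c19 : 0 ≤ (y^2-(1-x))^2*(1-x)^2 := mul_nonneg (sq_nonneg _) (sq_nonneg _)
    linarith [c1, c2, c3, c4, c5, c6, c7, c8, c9, c10, c11, c12, c13, c14, c15,
      c16, c17, c18, c19]
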